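/- Let a, b, c, d ∈ ℤ[i] with a·d - b·c = 1 and suppose Re(a·conj(c)) = 0 and Re(b·conj(d)) = 0 (equivalently Re(a·conj(c) + b·conj(d)) = 0). Then either all of Im(a), Re(b), Re(c), Im(d) are zero, or all of Re(a), Im(b), Im(c), Re(d) are zero. -/

import Mathlib

/-- If `a` and `c` are coprime Gaussian integers with `Re(a * conj c) = 0`,
then `a` is real or purely imaginary. -/
lemma gaussian_aux (a c : GaussianInt) (hco : IsCoprime a c)
    (h0 : a.re * c.re + a.im * c.im = 0) : a.re = 0 ∨ a.im = 0 := by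
  by_contra hcon
  push_neg at hcon
  obtain ⟨h1, h2⟩ := hcon
  set g : ℤ := (Int.gcd a.re a.im : ℤ) with hg
  have hgpos : 0 < Int.gcd a.re a.im := Int.gcd_pos_of_ne_zero_left _ h1
  have hgne : g ≠ 0 := by positivity
  have hxy : IsCoprime (a.re / g) (a.im / g) := by
    rw [Int.isCoprime_iff_gcd_eq_one]
    exact Int.gcd_div_gcd_div_gcd hgpos
  set x : ℤ := a.re / g with hxdef
  set y : ℤ := a.im / g with hydef
  have hx : a.re = g * x := (Int.mul_ediv_cancel' (Int.gcd_dvd_left _ _)).symm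
  have hy : a.im = g * y := (Int.mul_ediv_cancel' (Int.gcd_dvd_right _ _)).symm
  have hxne : x ≠ 0 := by intro h0x; rw [h0x, mul_zero] at hx; exact h1 hx
  have hyne : y ≠ 0 := by intro h0y; rw [h0y, mul_zero] at hy; exact h2 hy
  -- from h0 : g*x*c1 + g*y*c2 = 0
  have key : x * c.re + y * c.im = 0 := by
    have : g * (x * c.re + y * c.im) = g * 0 := by rw [hx, hy] at h0; ring_nf; ring_nf at h0; linarith
    exact mul_left_cancel₀ hgne this
  have hxdvd : x ∣ c.im := by
    have : x ∣ y * c.im := ⟨-c.re, by linarith⟩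
    exact (hxy.dvd_of_dvd_mul_left this)
  obtain ⟨w, hw⟩ := hxdvd
  have hc1 : c.re = -(y * w) := by
    have : x * c.re = x * (-(y*w)) := by rw [hw] at key; ring_nf; ring_nf at key; linarith
    exact mul_left_cancel₀ hxne this
  set z : GaussianInt := ⟨x, y⟩ with hz
  have hza : z ∣ a := ⟨⟨g, 0⟩, by ext <;> simp [hz, Zsqrtd.re_mul, Zsqrtd.im_mul, hx, hy] <;> ring⟩
  have hzc : z ∣ c := ⟨⟨0, w⟩, by ext <;> simp [hz, Zsqrtd.re_mul, Zsqrtd.im_mul, hc1, hw]⟩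
  have hu : IsUnit z := hco.isUnit_of_dvd' hza hzc
  have hnorm : z.norm.natAbs = 1 := Zsqrtd.norm_eq_one_iff.mpr hu
  have : x * x + y * y = 1 := by
    have : z.norm = 1 := by
      have h' := hnorm
      have hnn : 0 ≤ z.norm := by simp [Zsqrtd.norm]; nlinarith
      omega
    simpa [Zsqrtd.norm, hz] using this
  have hx1 : 1 ≤ x * x := Int.lt_iff_add_one_le.mp (mul_self_pos.mpr hxne)
  have hy1 : 1 ≤ y * y := Int.lt_iff_add_one_le.mp (mul_self_pos.mpr hyne)
  linarith

lemma gaussian_key_int (a1 a2 b1 b2 c1 c2 d1 d2 : ℤ)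
    (E1 : a1*d1 - a2*d2 - b1*c1 + b2*c2 = 1)
    (E2 : a1*d2 + a2*d1 - b1*c2 - b2*c1 = 0)
    (E3 : a1*c1 + a2*c2 = 0)
    (E4 : b1*d1 + b2*d2 = 0)
    (Ha : a1 = 0 ∨ a2 = 0) (Hb : b1 = 0 ∨ b2 = 0) :
    (a2 = 0 ∧ b1 = 0 ∧ c1 = 0 ∧ d2 = 0) ∨ (a1 = 0 ∧ b2 = 0 ∧ c2 = 0 ∧ d1 = 0) := by
  rcases Ha with ha | ha <;> rcases Hb with hb | hb <;> subst ha hb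
  · -- a1 = 0, b1 = 0
    simp only [zero_mul, mul_zero, zero_add, add_zero, zero_sub, sub_zero] at E1 E2 E3 E4
    -- E1 : -(a2*d2) + b2*c2 = 1, E2 : a2*d1 - b2*c1 = 0, E3 : a2*c2 = 0, E4 : b2*d2 = 0
    rcases mul_eq_zero.mp E3 with h | h
    · subst h
      have hb2 : b2 ≠ 0 := by rintro rfl; simp at E1
      have hd2 : d2 = 0 := by rcases mul_eq_zero.mp E4 with h | h; exact absurd h hb2; exact h
      have hc1 : c1 = 0 := by
        rcases mul_eq_zero.mp (by linarith : b2 * c1 = 0) with h | h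
        · exact absurd h hb2
        · exact h
      exact Or.inl ⟨rfl, rfl, hc1, hd2⟩
    · subst h
      have ha2 : a2 ≠ 0 := by rintro rfl; simp at E1
      have hd2 : d2 ≠ 0 := by rintro rfl; simp at E1
      have hb2 : b2 = 0 := by rcases mul_eq_zero.mp E4 with h | h; exact h; exact absurd h hd2
      have hd1 : d1 = 0 := by
        subst hb2; simp at E2
        tauto
      exact Or.inr ⟨rfl, hb2, rfl, hd1⟩
  · -- a1 = 0, b2 = 0
    simp only [zero_mul, mul_zero, zero_add, add_zero, zero_sub, sub_zero] at E1 E2 E3 E4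
    -- E1 : -(a2*d2) - b1*c1 = 1, E2 : a2*d1 - b1*c2 = 0, E3 : a2*c2 = 0, E4 : b1*d1 = 0
    rcases mul_eq_zero.mp E4 with h | h
    · subst h
      simp at E1 E2
      have ha2 : a2 ≠ 0 := by rintro rfl; simp at E1
      have hc2 : c2 = 0 := by rcases mul_eq_zero.mp E3 with h | h; exact absurd h ha2; exact h
      have hd1 : d1 = 0 := by tauto
      exact Or.inr ⟨rfl, rfl, hc2, hd1⟩
    · subst h
      simp at E2 E4
      rcases E2 with h | h
      · subst h
        simp at E1 E4
        have ha2 : a2 ≠ 0 := by rintro rfl; simp at E1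
        have hc2 : c2 = 0 := by rcases mul_eq_zero.mp E3 with h | h; exact absurd h ha2; exact h
        exact Or.inr ⟨rfl, rfl, hc2, rfl⟩
      · exact Or.inr ⟨rfl, rfl, h, rfl⟩
  · -- a2 = 0, b1 = 0
    simp only [zero_mul, mul_zero, zero_add, add_zero, zero_sub, sub_zero] at E1 E2 E3 E4
    -- E1 : a1*d1 + b2*c2 = 1, E2 : a1*d2 - b2*c1 = 0, E3 : a1*c1 = 0, E4 : b2*d2 = 0
    rcases mul_eq_zero.mp E4 with h | h
    · subst h
      simp at E1 E2
      have ha1 : a1 ≠ 0 := by rintro rfl; simp at E1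
      have hc1 : c1 = 0 := by rcases mul_eq_zero.mp E3 with h | h; exact absurd h ha1; exact h
      have hd2 : d2 = 0 := by tauto
      exact Or.inl ⟨rfl, rfl, hc1, hd2⟩
    · subst h
      simp at E2
      rcases E2 with h | h
      · subst h
        simp at E1
        have ha1 : a1 ≠ 0 := by rintro rfl; simp at E1
        have hc1 : c1 = 0 := by rcases mul_eq_zero.mp E3 with h | h; exact absurd h ha1; exact h
        exact Or.inl ⟨rfl, rfl, hc1, rfl⟩
      · exact Or.inl ⟨rfl, rfl, h, rfl⟩
  · -- a2 = 0, b2 = 0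
    simp only [zero_mul, mul_zero, zero_add, add_zero, zero_sub, sub_zero] at E1 E2 E3 E4
    -- E1 : a1*d1 - b1*c1 = 1, E2 : a1*d2 - b1*c2 = 0, E3 : a1*c1 = 0, E4 : b1*d1 = 0
    rcases mul_eq_zero.mp E3 with h | h
    · subst h
      simp at E1 E2
      have hb1 : b1 ≠ 0 := by rintro rfl; simp at E1
      have hd1 : d1 = 0 := by rcases mul_eq_zero.mp E4 with h | h; exact absurd h hb1; exact h
      have hc2 : c2 = 0 := by tauto
      exact Or.inr ⟨rfl, rfl, hc2, hd1⟩
    · subst h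
      simp at E1
      have ha1 : a1 ≠ 0 := by rintro rfl; simp at E1
      have hd1 : d1 ≠ 0 := by rintro rfl; simp at E1
      have hb1 : b1 = 0 := by rcases mul_eq_zero.mp E4 with h | h; exact h; exact absurd h hd1
      have hd2 : d2 = 0 := by
        subst hb1; simp at E2
        tauto
      exact Or.inl ⟨rfl, hb1, rfl, hd2⟩

theorem gaussian_singular_classification (a b c d : GaussianInt)
    (h : a * d - b * c = 1)
    (hac : (a * star c).re = 0) (hbd : (b * star d).re = 0) :
    (a.im = 0 ∧ b.re = 0 ∧ c.re = 0 ∧ d.im = 0) ∨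
      (a.re = 0 ∧ b.im = 0 ∧ c.im = 0 ∧ d.re = 0) := by
  have E1 : a.re*d.re - a.im*d.im - (b.re*c.re - b.im*c.im) = 1 := by
    have := congrArg Zsqrtd.re h
    simp [Zsqrtd.re_mul] at this
    linarith
  have E2 : a.re*d.im + a.im*d.re - (b.re*c.im + b.im*c.re) = 0 := by
    have := congrArg Zsqrtd.im h
    simp [Zsqrtd.im_mul] at this
    linarith
  have E3 : a.re*c.re + a.im*c.im = 0 := by
    simp [Zsqrtd.re_mul] at hac
    linarith
  have E4 : b.re*d.re + b.im*d.im = 0 := by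
    simp [Zsqrtd.re_mul] at hbd
    linarith
  have hco1 : IsCoprime a c := ⟨d, -b, by linear_combination h⟩
  have hco2 : IsCoprime b d := ⟨-c, a, by linear_combination h⟩
  have Ha := gaussian_aux a c hco1 E3
  have Hb := gaussian_aux b d hco2 E4
  rcases gaussian_key_int a.re a.im b.re b.im c.re c.im d.re d.im
    (by linarith) (by linarith) E3 E4 Ha Hb with H | H
  · exact Or.inl ⟨H.1, H.2.1, H.2.2.1, H.2.2.2⟩
  · exact Or.inr ⟨H.1, H.2.1, H.2.2.1, H.2.2.2⟩
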